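/- Upper bound for random hyperbolic Haar sums: if (ε_R) are independent Rademacher random variables indexed by the dyadic boxes R ⊆ [0,1)^d with |R| = 2^{-n}, then 𝔼 ‖Σ_{|R|=2^{-n}} ε_R h_R‖_∞ ≤ C_d n^{d/2} for a constant C_d depending only on d. -/

import Mathlib

open MeasureTheory Finset

noncomputable section

/-- The dyadic interval `[k/2^m, (k+1)/2^m)`. -/
def dyadI (m k : ℕ) : Set ℝ := Set.Ico ((k : ℝ) / 2 ^ m) (((k : ℝ) + 1) / 2 ^ m)

/-- The `L^∞`-normalized Haar function of the dyadic interval `dyadI m k`: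
`-1` on the left half, `+1` on the right half, `0` elsewhere. -/
def haar (m k : ℕ) : ℝ → ℝ :=
  (dyadI (m + 1) (2 * k + 1)).indicator (fun _ => (1 : ℝ))
    - (dyadI (m + 1) (2 * k)).indicator (fun _ => (1 : ℝ))

/-- The Haar function of the dyadic box with side lengths `2^{-r i}` and positions `k i`. -/
def haarBox {d : ℕ} (r k : Fin d → ℕ) : (Fin d → ℝ) → ℝ :=
  fun x => ∏ i, haar (r i) (k i) (x i)

/-- The unit cube `[0,1)^d`. -/
def unitCube (d : ℕ) : Set (Fin d → ℝ) := Set.univ.pi fun _ => Set.Ico (0 : ℝ) 1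

/-- Index set for positions of dyadic boxes of level vector `r`. -/
def boxIdx (d : ℕ) (r : Fin d → ℕ) : Finset (Fin d → ℕ) :=
  Fintype.piFinset fun i => Finset.range (2 ^ r i)

/-- The level vectors `r ∈ ℕ^d` with `|r| = r₁ + ⋯ + r_d = n`. -/
def levIdx (d n : ℕ) : Finset (Fin d → ℕ) :=
  (Fintype.piFinset fun _ : Fin d => Finset.range (n + 1)).filter fun r => ∑ i, r i = n


lemma mem_dyadI {m k : ℕ} {x : ℝ} :
    x ∈ dyadI m k ↔ (k : ℝ) ≤ x * 2 ^ m ∧ x * 2 ^ m < (k : ℝ) + 1 := by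
  have h2 : (0:ℝ) < 2 ^ m := by positivity
  simp only [dyadI, Set.mem_Ico, div_le_iff₀ h2, lt_div_iff₀ h2]

/-- key constancy criterion -/
lemma mem_dyadI_iff_nat {m M k j : ℕ} (h : m ≤ M) {y : ℝ}
    (hy1 : (j : ℝ) ≤ y * 2 ^ M) (hy2 : y * 2 ^ M < (j : ℝ) + 1) :
    y ∈ dyadI m k ↔ (k * 2 ^ (M - m) ≤ j ∧ j < (k + 1) * 2 ^ (M - m)) := by
  have hpow : (2:ℝ) ^ m * 2 ^ (M - m) = 2 ^ M := by
    rw [← pow_add]; congr 1; omega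
  have h2 : (0:ℝ) < 2 ^ (M - m) := by positivity
  rw [mem_dyadI]
  constructor
  · rintro ⟨a, b⟩
    have a' : (k : ℝ) * 2 ^ (M - m) ≤ y * 2 ^ M := by
      calc (k:ℝ) * 2 ^ (M-m) ≤ (y * 2 ^ m) * 2 ^ (M-m) := by nlinarith
      _ = y * 2 ^ M := by rw [mul_assoc, hpow]
    have b' : y * 2 ^ M < ((k : ℝ) + 1) * 2 ^ (M - m) := by
      calc y * 2 ^ M = (y * 2 ^ m) * 2 ^ (M-m) := by rw [mul_assoc, hpow]
      _ < ((k:ℝ)+1) * 2 ^ (M-m) := by nlinarith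
    constructor
    · have : (k * 2 ^ (M - m) : ℝ) < (j : ℝ) + 1 := by push_cast; nlinarith
      exact_mod_cast Nat.lt_add_one_iff.mp (by exact_mod_cast this)
    · have : (j : ℝ) < ((k + 1) * 2 ^ (M - m) : ℕ) := by push_cast; nlinarith
      exact_mod_cast this
  · rintro ⟨a, b⟩
    have a' : ((k * 2 ^ (M - m) : ℕ) : ℝ) ≤ (j : ℝ) := by exact_mod_cast a
    have b' : ((j : ℝ) + 1) ≤ (((k + 1) * 2 ^ (M - m) : ℕ) : ℝ) := by exact_mod_cast b
    push_cast at a' b'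
    constructor
    · have h3 : (k:ℝ) * 2 ^ (M - m) ≤ (y * 2 ^ m) * 2 ^ (M - m) := by
        rw [mul_assoc, hpow]; linarith
      exact le_of_mul_le_mul_right h3 h2
    · have h3 : (y * 2 ^ m) * 2 ^ (M - m) < ((k:ℝ) + 1) * 2 ^ (M - m) := by
        rw [mul_assoc, hpow]; linarith
      exact lt_of_mul_lt_mul_right h3 h2.le

lemma mem_dyadI_iff_of_le {m M k j : ℕ} (h : m ≤ M) {x : ℝ} (hx : x ∈ dyadI M j) :
    (x ∈ dyadI m k ↔ ((j : ℝ) / 2 ^ M) ∈ dyadI m k) := by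
  rw [mem_dyadI] at hx
  have h2 : (0:ℝ) < 2 ^ M := by positivity
  have hj1 : (j : ℝ) ≤ ((j : ℝ) / 2 ^ M) * 2 ^ M := by rw [div_mul_cancel₀]; positivity
  have hj2 : ((j : ℝ) / 2 ^ M) * 2 ^ M < (j : ℝ) + 1 := by
    rw [div_mul_cancel₀]; · linarith
    · positivity
  rw [mem_dyadI_iff_nat h hx.1 hx.2, mem_dyadI_iff_nat h hj1 hj2]

lemma haar_congr {m M k j : ℕ} (h : m + 1 ≤ M) {x : ℝ} (hx : x ∈ dyadI M j) :
    haar m k x = haar m k ((j : ℝ) / 2 ^ M) := by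
  classical
  simp only [haar, Pi.sub_apply]
  rw [Set.indicator_apply, Set.indicator_apply, Set.indicator_apply, Set.indicator_apply,
    mem_dyadI_iff_of_le h hx, mem_dyadI_iff_of_le h hx]

lemma dyadI_halves {m k : ℕ} : dyadI (m+1) (2*k) ∪ dyadI (m+1) (2*k+1) ⊆ dyadI m k := by
  intro x hx
  rw [mem_dyadI]
  have h2 : (0:ℝ) < 2 ^ m := by positivity
  rcases hx with hx | hx <;> rw [mem_dyadI] at hx <;> obtain ⟨a, b⟩ := hx <;>
    rw [pow_succ] at a b <;> push_cast at a b ⊢ <;> constructor <;> nlinarith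

lemma mem_dyadI_of_haar_ne {m k : ℕ} {x : ℝ} (h : haar m k x ≠ 0) : x ∈ dyadI m k := by
  apply dyadI_halves (m := m) (k := k)
  by_contra hc
  rw [Set.mem_union, not_or] at hc
  apply h
  simp [haar, Set.indicator_of_notMem hc.1, Set.indicator_of_notMem hc.2]

lemma dyadI_inj {m k k' : ℕ} {x : ℝ} (h : x ∈ dyadI m k) (h' : x ∈ dyadI m k') : k = k' := by
  rw [mem_dyadI] at h h'
  have ha : (k : ℝ) < (k' : ℝ) + 1 := by linarith [h.1, h'.2]
  have hb : (k' : ℝ) < (k : ℝ) + 1 := by linarith [h.2, h'.1]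
  have h1 : k < k' + 1 := by exact_mod_cast ha
  have h2 : k' < k + 1 := by exact_mod_cast hb
  omega

lemma abs_haar_le_one {m k : ℕ} {x : ℝ} : |haar m k x| ≤ 1 := by
  simp only [haar, Pi.sub_apply]
  by_cases h1 : x ∈ dyadI (m + 1) (2 * k + 1) <;>
    by_cases h2 : x ∈ dyadI (m + 1) (2 * k) <;>
    simp [h1, h2]

lemma haar_eq_zero_outside {m k : ℕ} (hk : k < 2 ^ m) {x : ℝ} (hx : x ∉ Set.Ico (0:ℝ) 1) :
    haar m k x = 0 := by
  by_contra h
  have hm := mem_dyadI_of_haar_ne h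
  rw [mem_dyadI] at hm
  apply hx
  have h2 : (0:ℝ) < 2 ^ m := by positivity
  have hk' : (k : ℝ) + 1 ≤ 2 ^ m := by exact_mod_cast hk
  constructor
  · nlinarith [hm.1]
  · nlinarith [hm.2]

lemma haar_eq_zero_of_big {m k : ℕ} (hk : 2 ^ m ≤ k) {y : ℝ} (hy : y < 1) : haar m k y = 0 := by
  by_contra h
  have hm := (mem_dyadI.mp (mem_dyadI_of_haar_ne h))
  have h2 : (0:ℝ) < 2 ^ m := by positivity
  have : (k : ℝ) < 2 ^ m := lt_of_le_of_lt hm.1 (by nlinarith [hm.2])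
  have : (2:ℝ) ^ m ≤ k := by exact_mod_cast hk
  linarith

lemma levIdx_le {d n : ℕ} {r : Fin d → ℕ} (hr : r ∈ levIdx d n) (i : Fin d) : r i ≤ n := by
  rw [levIdx, mem_filter] at hr
  rw [← hr.2]
  exact Finset.single_le_sum (fun j _ => Nat.zero_le _) (mem_univ i)

lemma abs_haarBox_le_one {d : ℕ} {r k : Fin d → ℕ} {x : Fin d → ℝ} : |haarBox r k x| ≤ 1 := by
  rw [haarBox, Finset.abs_prod]
  exact Finset.prod_le_one (fun i _ => abs_nonneg _) (fun i _ => abs_haar_le_one)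

lemma haarBox_inj {d : ℕ} {r k k' : Fin d → ℕ} {x : Fin d → ℝ}
    (h : haarBox r k x ≠ 0) (h' : haarBox r k' x ≠ 0) : k = k' := by
  funext i
  rw [haarBox, Finset.prod_ne_zero_iff] at h h'
  exact dyadI_inj (mem_dyadI_of_haar_ne (h i (mem_univ i)))
    (mem_dyadI_of_haar_ne (h' i (mem_univ i)))

/-- Per-level sum of squares of Haar box values is at most 1. -/
lemma sq_sum_le_one {d : ℕ} (r : Fin d → ℕ) (y : Fin d → ℝ) (K : Finset (Fin d → ℕ)) :
    ∑ k ∈ K, (haarBox r k y) ^ 2 ≤ 1 := by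
  by_cases h : ∀ k ∈ K, haarBox r k y = 0
  · calc ∑ k ∈ K, (haarBox r k y) ^ 2 = 0 :=
        Finset.sum_eq_zero fun k hk => by simp [h k hk]
      _ ≤ 1 := by norm_num
  · push_neg at h
    obtain ⟨k0, hk0K, hk0⟩ := h
    rw [Finset.sum_eq_single_of_mem k0 hk0K (fun b hb hbne => by
      by_contra hb0
      exact hbne (haarBox_inj (by intro hz; rw [hz] at hb0; exact hb0 (by ring)) hk0))]
    have := abs_haarBox_le_one (r := r) (k := k0) (x := y)
    nlinarith [abs_nonneg (haarBox r k0 y), sq_abs (haarBox r k0 y)]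

/-- Extend the inner sum from `boxIdx d r` to the full cube of positions. -/
lemma sum_boxIdx_ext {d n : ℕ} {r : Fin d → ℕ} (hr : r ∈ levIdx d n)
    {y : Fin d → ℝ} (hy : ∀ i, y i < 1) (f : (Fin d → ℕ) → ℝ) :
    ∑ k ∈ boxIdx d r, f k * haarBox r k y
      = ∑ k ∈ Fintype.piFinset (fun _ : Fin d => Finset.range (2 ^ n)), f k * haarBox r k y := by
  apply Finset.sum_subset
  · intro k hk
    rw [boxIdx, Fintype.mem_piFinset] at hk
    rw [Fintype.mem_piFinset]
    intro i
    rw [Finset.mem_range]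
    exact lt_of_lt_of_le (Finset.mem_range.mp (hk i))
      (Nat.pow_le_pow_right (by norm_num) (levIdx_le hr i))
  · intro k hk hknot
    rw [boxIdx, Fintype.mem_piFinset] at hknot
    push_neg at hknot
    obtain ⟨i, hi⟩ := hknot
    rw [Finset.mem_range, not_lt] at hi
    have : haarBox r k y = 0 := by
      rw [haarBox]
      exact Finset.prod_eq_zero (mem_univ i) (haar_eq_zero_of_big hi (hy i))
    rw [this, mul_zero]

/-- Piecewise constancy: every value of the sum is `0` or a value at a grid point. -/
lemma sum_piecewise {d n : ℕ} (f : (Fin d → ℕ) × (Fin d → ℕ) → ℝ) (x : Fin d → ℝ) :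
    (∑ r ∈ levIdx d n, ∑ k ∈ boxIdx d r, f (r, k) * haarBox r k x) = 0 ∨
    ∃ j ∈ Fintype.piFinset (fun _ : Fin d => Finset.range (2 ^ (n + 1))),
      (∑ r ∈ levIdx d n, ∑ k ∈ boxIdx d r, f (r, k) * haarBox r k x)
        = ∑ r ∈ levIdx d n, ∑ k ∈ boxIdx d r, f (r, k)
            * haarBox r k (fun i => (j i : ℝ) / 2 ^ (n + 1)) := by
  by_cases hx : x ∈ unitCube d
  · right
    rw [unitCube, Set.mem_univ_pi] at hx
    refine ⟨fun i => ⌊x i * 2 ^ (n + 1)⌋₊, ?_, ?_⟩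
    · rw [Fintype.mem_piFinset]
      intro i
      rw [Finset.mem_range, Nat.floor_lt (by nlinarith [(hx i).1, pow_pos (show (0:ℝ)<2 by norm_num) (n+1)])]
      have : (0:ℝ) < 2 ^ (n+1) := by positivity
      calc x i * 2 ^ (n+1) < 1 * 2 ^ (n+1) := by nlinarith [(hx i).2]
        _ = ((2 ^ (n+1) : ℕ) : ℝ) := by push_cast; ring
    · apply Finset.sum_congr rfl
      intro r hr
      apply Finset.sum_congr rfl
      intro k _
      congr 1
      rw [haarBox, haarBox]
      apply Finset.prod_congr rfl
      intro i _
      have hmem : x i ∈ dyadI (n + 1) ⌊x i * 2 ^ (n + 1)⌋₊ := by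
        rw [mem_dyadI]
        exact ⟨Nat.floor_le (by nlinarith [(hx i).1, pow_pos (show (0:ℝ)<2 by norm_num) (n+1)]),
          Nat.lt_floor_add_one _⟩
      exact haar_congr (by have := levIdx_le hr i; omega) hmem
  · left
    rw [unitCube, Set.mem_univ_pi] at hx
    push_neg at hx
    obtain ⟨i, hi⟩ := hx
    apply Finset.sum_eq_zero
    intro r _
    apply Finset.sum_eq_zero
    intro k hk
    rw [boxIdx, Fintype.mem_piFinset] at hk
    have : haarBox r k x = 0 := by
      rw [haarBox]
      exact Finset.prod_eq_zero (mem_univ i)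
        (haar_eq_zero_outside (Finset.mem_range.mp (hk i)) hi)
    rw [this, mul_zero]

/-- Cardinality bound for the level index set. -/
lemma levIdx_card_le {d n : ℕ} (hd : 1 ≤ d) : (levIdx d n).card ≤ (n + 1) ^ (d - 1) := by
  obtain ⟨d', rfl⟩ : ∃ d', d = d' + 1 := ⟨d - 1, by omega⟩
  have : (levIdx (d' + 1) n).card ≤
      (Fintype.piFinset fun _ : Fin d' => Finset.range (n + 1)).card := by
    apply Finset.card_le_card_of_injOn (fun r => fun i : Fin d' => r i.castSucc)
    · intro r hr
      rw [levIdx, Finset.mem_coe, mem_filter, Fintype.mem_piFinset] at hr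
      rw [Finset.mem_coe, Fintype.mem_piFinset]
      exact fun i => hr.1 i.castSucc
    · intro r hr s hs hrs
      simp only [levIdx, coe_filter, Set.mem_setOf_eq] at hr hs
      have hsum : ∑ i, r i = ∑ i, s i := by rw [hr.2, hs.2]
      rw [Fin.sum_univ_castSucc, Fin.sum_univ_castSucc] at hsum
      have hcast : ∀ i : Fin d', r i.castSucc = s i.castSucc := fun i => congrFun hrs i
      have hsum2 : ∑ i : Fin d', r i.castSucc = ∑ i : Fin d', s i.castSucc :=
        Finset.sum_congr rfl (fun i _ => hcast i)
      have hlast : r (Fin.last d') = s (Fin.last d') := by omega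
      funext i
      refine Fin.lastCases hlast (fun i => hcast i) i
  simpa using this

variable {Ω : Type} [MeasurableSpace Ω] {μ : Measure Ω}
lemma rademacher_ae [IsProbabilityMeasure μ] {X : Ω → ℝ} (hX : Measurable X)
    (h1 : μ {ω | X ω = 1} = 1 / 2) (h2 : μ {ω | X ω = -1} = 1 / 2) :
    ∀ᵐ ω ∂μ, X ω = 1 ∨ X ω = -1 := by
  have hAm : MeasurableSet {ω | X ω = 1} := hX (measurableSet_singleton 1)
  have hBm : MeasurableSet {ω | X ω = -1} := hX (measurableSet_singleton (-1))
  have hdisj : Disjoint {ω | X ω = 1} {ω | X ω = -1} := by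
    rw [Set.disjoint_left]
    intro ω hω hω'
    rw [Set.mem_setOf_eq] at hω hω'
    norm_num [hω] at hω'
  have hunion : μ ({ω | X ω = 1} ∪ {ω | X ω = -1}) = 1 := by
    rw [measure_union hdisj hBm, h1, h2]
    simp only [one_div]
    exact ENNReal.inv_two_add_inv_two
  rw [MeasureTheory.ae_iff]
  have hc : μ ({ω | X ω = 1} ∪ {ω | X ω = -1})ᶜ = 1 - μ ({ω | X ω = 1} ∪ {ω | X ω = -1}) := by
    rw [measure_compl (hAm.union hBm) (measure_ne_top μ _), measure_univ]
  rw [hunion, tsub_self] at hc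
  convert hc using 2
  ext ω; simp

/-- Integral of `exp (c * X)` for a Rademacher variable `X`. -/
lemma rademacher_exp_integral [IsProbabilityMeasure μ] {X : Ω → ℝ} (hX : Measurable X)
    (h1 : μ {ω | X ω = 1} = 1 / 2) (h2 : μ {ω | X ω = -1} = 1 / 2) (c : ℝ) :
    ∫ ω, Real.exp (c * X ω) ∂μ = Real.cosh c := by
  classical
  set A : Set Ω := {ω | X ω = 1} with hA
  set B : Set Ω := {ω | X ω = -1} with hB
  have hAm : MeasurableSet A := hX (measurableSet_singleton 1)
  have hBm : MeasurableSet B := hX (measurableSet_singleton (-1))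
  have hdisj : Disjoint A B := by
    rw [Set.disjoint_left]
    intro ω hω hω'
    rw [hA, Set.mem_setOf_eq] at hω
    rw [hB, Set.mem_setOf_eq] at hω'
    norm_num [hω] at hω'
  have hunion : μ (A ∪ B) = 1 := by
    rw [measure_union hdisj hBm, h1, h2]
    simp only [one_div]
    exact ENNReal.inv_two_add_inv_two
  have hae : ∀ᵐ ω ∂μ, ω ∈ A ∪ B := by
    rw [MeasureTheory.ae_iff]
    have : μ (A ∪ B)ᶜ = 1 - μ (A ∪ B) := by
      rw [measure_compl (hAm.union hBm) (measure_ne_top μ _), measure_univ]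
    simp only [hunion, tsub_self] at this
    exact this
  set g : Ω → ℝ := A.indicator (fun _ => Real.exp c) + B.indicator (fun _ => Real.exp (-c))
    with hg
  have hfg : (fun ω => Real.exp (c * X ω)) =ᵐ[μ] g := by
    filter_upwards [hae] with ω hω
    rcases hω with hω | hω
    · have hX1 : X ω = 1 := hω
      have hωB : ω ∉ B := by rw [hB, Set.mem_setOf_eq, hX1]; norm_num
      simp [hg, Set.indicator_of_mem hω, Set.indicator_of_notMem hωB, hX1]
    · have hX1 : X ω = -1 := hω
      have hωA : ω ∉ A := by rw [hA, Set.mem_setOf_eq, hX1]; norm_num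
      simp [hg, Set.indicator_of_mem hω, Set.indicator_of_notMem hωA, hX1]
  rw [integral_congr_ae hfg, hg]
  simp only [Pi.add_apply]
  rw [integral_add ((integrable_const _).indicator hAm) ((integrable_const _).indicator hBm),
    integral_indicator_const _ hAm, integral_indicator_const _ hBm, measureReal_def, measureReal_def, h1, h2, Real.cosh_eq]
  norm_num
  ring

lemma rademacher_integrable_exp [IsProbabilityMeasure μ] {X : Ω → ℝ} (hX : Measurable X)
    (h1 : μ {ω | X ω = 1} = 1 / 2) (h2 : μ {ω | X ω = -1} = 1 / 2) (c : ℝ) :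
    Integrable (fun ω => Real.exp (c * X ω)) μ := by
  have hae := rademacher_ae hX h1 h2
  refine Integrable.mono' (integrable_const (Real.exp |c|))
    ((hX.const_mul c).exp.aestronglyMeasurable) ?_
  filter_upwards [hae] with ω hω
  rw [Real.norm_eq_abs, Real.abs_exp]
  apply Real.exp_le_exp.mpr
  rcases hω with hω | hω <;> rw [hω] <;> simp <;>
    linarith [neg_abs_le c, le_abs_self c]

/-- Jensen's inequality for `exp`. -/
lemma exp_integral_le_integral_exp [IsProbabilityMeasure μ] {g : Ω → ℝ}
    (hg : Integrable g μ) (hexp : Integrable (fun ω => Real.exp (g ω)) μ) :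
    Real.exp (∫ ω, g ω ∂μ) ≤ ∫ ω, Real.exp (g ω) ∂μ := by
  set m := ∫ ω, g ω ∂μ with hm
  have hpt : ∀ ω, Real.exp m + Real.exp m * (g ω - m) ≤ Real.exp (g ω) := by
    intro ω
    have h1 : (g ω - m) + 1 ≤ Real.exp (g ω - m) := Real.add_one_le_exp _
    have h2 : Real.exp m * ((g ω - m) + 1) ≤ Real.exp m * Real.exp (g ω - m) :=
      mul_le_mul_of_nonneg_left h1 (Real.exp_nonneg m)
    rw [← Real.exp_add] at h2
    calc Real.exp m + Real.exp m * (g ω - m) = Real.exp m * ((g ω - m) + 1) := by ring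
      _ ≤ Real.exp (m + (g ω - m)) := h2
      _ = Real.exp (g ω) := by ring_nf
  have hint : Integrable (fun ω => Real.exp m + Real.exp m * (g ω - m)) μ :=
    (integrable_const _).add (((hg.sub (integrable_const m))).const_mul _)
  have hmono := integral_mono hint hexp hpt
  have hi2 : Integrable (fun ω => Real.exp m * (g ω - m)) μ := by
    exact (hg.sub (integrable_const m)).const_mul _
  calc Real.exp m = ∫ ω, (Real.exp m + Real.exp m * (g ω - m)) ∂μ := by
        rw [integral_add (integrable_const _) hi2, integral_const, integral_const_mul,
          integral_sub hg (integrable_const m), integral_const]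
        simp [← hm]
    _ ≤ _ := hmono

open ProbabilityTheory in
/-- MGF bound for a Rademacher sum with coefficients `a`. -/
lemma mgf_rademacher_sum [IsProbabilityMeasure μ] {ι : Type*} {ε : ι → Ω → ℝ}
    (hmeas : ∀ p, Measurable (ε p)) (hindep : iIndepFun ε μ)
    (hrad : ∀ p, μ {ω | ε p ω = 1} = 1 / 2 ∧ μ {ω | ε p ω = -1} = 1 / 2)
    (P : Finset ι) (a : ι → ℝ) (t : ℝ) :
    ∫ ω, Real.exp (t * ∑ p ∈ P, a p * ε p ω) ∂μ
      ≤ Real.exp (t ^ 2 * (∑ p ∈ P, (a p) ^ 2) / 2) := by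
  classical
  set X : ι → Ω → ℝ := fun p ω => a p * ε p ω with hX
  have hXmeas : ∀ p, Measurable (X p) := fun p => (hmeas p).const_mul _
  have hindep' : iIndepFun X μ :=
    hindep.comp (fun p v => a p * v) (fun p => measurable_id.const_mul _)
  have hkey : mgf (∑ p ∈ P, X p) μ t = ∏ p ∈ P, mgf (X p) μ t :=
    hindep'.mgf_sum hXmeas P
  have hLHS : (∫ ω, Real.exp (t * ∑ p ∈ P, a p * ε p ω) ∂μ) = mgf (∑ p ∈ P, X p) μ t := by
    rw [mgf]
    congr 1
    funext ω
    simp only [Finset.sum_apply, hX]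
  rw [hLHS, hkey]
  have hfac : ∀ p ∈ P, mgf (X p) μ t ≤ Real.exp (t ^ 2 * (a p) ^ 2 / 2) := by
    intro p _
    have : mgf (X p) μ t = Real.cosh (t * a p) := by
      rw [mgf]
      have : ∀ ω, Real.exp (t * X p ω) = Real.exp ((t * a p) * ε p ω) := by
        intro ω; rw [hX]; ring_nf
      rw [integral_congr_ae (Filter.Eventually.of_forall this)]
      exact rademacher_exp_integral (hmeas p) (hrad p).1 (hrad p).2 _
    rw [this]
    calc Real.cosh (t * a p) ≤ Real.exp ((t * a p) ^ 2 / 2) := Real.cosh_le_exp_half_sq _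
      _ = Real.exp (t ^ 2 * (a p) ^ 2 / 2) := by ring_nf
  calc ∏ p ∈ P, mgf (X p) μ t ≤ ∏ p ∈ P, Real.exp (t ^ 2 * (a p) ^ 2 / 2) :=
        Finset.prod_le_prod (fun p _ => mgf_nonneg) hfac
    _ = Real.exp (∑ p ∈ P, t ^ 2 * (a p) ^ 2 / 2) := by rw [Real.exp_sum]
    _ = Real.exp (t ^ 2 * (∑ p ∈ P, (a p) ^ 2) / 2) := by
        congr 1
        rw [Finset.mul_sum, Finset.sum_div]


open ProbabilityTheory in
/-- Upper bound for random hyperbolic Haar sums: if `(ε_R)` are independent Rademacher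
random variables indexed by the dyadic boxes of volume `2^{-n}` in `[0,1)^d`, then
`𝔼 ‖Σ ε_R h_R‖_∞ ≤ C_d n^{d/2}`. -/
theorem stmt_17 (d : ℕ) (hd : 2 ≤ d) :
    ∃ C : ℝ, 0 < C ∧ ∀ n : ℕ, 1 ≤ n →
      ∀ (Ω : Type) (mΩ : MeasurableSpace Ω) (μ : Measure Ω), IsProbabilityMeasure μ →
        ∀ ε : ((Fin d → ℕ) × (Fin d → ℕ)) → Ω → ℝ,
          (∀ p, Measurable (ε p)) →
          iIndepFun ε μ →
          (∀ p, μ {ω | ε p ω = 1} = 1 / 2 ∧ μ {ω | ε p ω = -1} = 1 / 2) →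
          ∫ ω, (⨆ x : Fin d → ℝ,
              |∑ r ∈ levIdx d n, ∑ k ∈ boxIdx d r, ε (r, k) ω * haarBox r k x|) ∂μ
            ≤ C * (n : ℝ) ^ ((d : ℝ) / 2) := by
  classical
  refine ⟨Real.sqrt (6 * d * 2 ^ (d - 1)), Real.sqrt_pos.mpr (by positivity), ?_⟩
  intro n hn Ω mΩ μ hμ ε hmeas hindep hrad
  -- basic objects
  set J : Finset (Fin d → ℕ) := Fintype.piFinset (fun _ : Fin d => Finset.range (2 ^ (n + 1)))
    with hJdef
  have hJ : J.Nonempty := ⟨fun _ => 0, by simp [hJdef, pow_pos]⟩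
  set pt : (Fin d → ℕ) → (Fin d → ℝ) := fun j i => (j i : ℝ) / 2 ^ (n + 1) with hptdef
  set S : Ω → (Fin d → ℝ) → ℝ := fun ω x =>
    ∑ r ∈ levIdx d n, ∑ k ∈ boxIdx d r, ε (r, k) ω * haarBox r k x with hSdef
  set K : Finset (Fin d → ℕ) := Fintype.piFinset (fun _ : Fin d => Finset.range (2 ^ n))
    with hKdef
  set P : Finset ((Fin d → ℕ) × (Fin d → ℕ)) := (levIdx d n) ×ˢ K with hPdef
  have hpt_lt : ∀ j ∈ J, ∀ i, pt j i < 1 := by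
    intro j hj i
    rw [hJdef, Fintype.mem_piFinset] at hj
    have := Finset.mem_range.mp (hj i)
    rw [hptdef]
    have h2 : (0:ℝ) < 2 ^ (n+1) := by positivity
    rw [div_lt_one h2]
    calc ((j i : ℝ)) < ((2 ^ (n+1) : ℕ) : ℝ) := by exact_mod_cast this
      _ = 2 ^ (n+1) := by push_cast; ring
  -- representation of S at grid points as a Rademacher sum
  have hrepr : ∀ j ∈ J, ∀ ω, S ω (pt j) = ∑ p ∈ P, haarBox p.1 p.2 (pt j) * ε p ω := by
    intro j hj ω
    rw [hSdef, hPdef, Finset.sum_product]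
    apply Finset.sum_congr rfl
    intro r hr
    rw [show (∑ k ∈ boxIdx d r, ε (r, k) ω * haarBox r k (pt j))
        = ∑ k ∈ boxIdx d r, haarBox r k (pt j) * ε (r, k) ω from
      Finset.sum_congr rfl (fun k _ => mul_comm _ _)]
    rw [show (∑ k ∈ boxIdx d r, haarBox r k (pt j) * ε (r, k) ω)
        = ∑ k ∈ boxIdx d r, (fun k => ε (r, k) ω) k * haarBox r k (pt j) from
      Finset.sum_congr rfl (fun k _ => mul_comm _ _)]
    rw [sum_boxIdx_ext hr (hpt_lt j hj) (fun k => ε (r, k) ω), ← hKdef]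
    exact Finset.sum_congr rfl (fun k _ => mul_comm _ _)
  -- the sum of squared coefficients is at most Nb
  set Nb : ℝ := ((n + 1 : ℕ) : ℝ) ^ (d - 1) with hNbdef
  have hNb_pos : 0 < Nb := by rw [hNbdef]; positivity
  have hsq : ∀ j, ∑ p ∈ P, (haarBox p.1 p.2 (pt j)) ^ 2 ≤ Nb := by
    intro j
    rw [hPdef, Finset.sum_product]
    calc ∑ r ∈ levIdx d n, ∑ k ∈ K, (haarBox r k (pt j)) ^ 2
        ≤ ∑ r ∈ levIdx d n, 1 :=
          Finset.sum_le_sum (fun r _ => sq_sum_le_one r (pt j) K)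
      _ = ((levIdx d n).card : ℝ) := by rw [Finset.sum_const]; simp
      _ ≤ Nb := by
          rw [hNbdef]
          exact_mod_cast levIdx_card_le (by omega)
  -- measurability of S at grid points
  have hSmeas : ∀ j, Measurable (fun ω => S ω (pt j)) :=
    fun j => Finset.measurable_sum _ (fun r _ =>
      Finset.measurable_sum _ (fun k _ => (hmeas (r, k)).mul_const _))
  -- a.e. boundedness
  have hae : ∀ᵐ ω ∂μ, ∀ p : ((Fin d → ℕ) × (Fin d → ℕ)), ε p ω = 1 ∨ ε p ω = -1 :=
    MeasureTheory.ae_all_iff.mpr (fun p => rademacher_ae (hmeas p) (hrad p).1 (hrad p).2)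
  have hSbd : ∀ᵐ ω ∂μ, ∀ j ∈ J, |S ω (pt j)| ≤ (P.card : ℝ) := by
    filter_upwards [hae] with ω hω
    intro j hj
    rw [hrepr j hj ω]
    calc |∑ p ∈ P, haarBox p.1 p.2 (pt j) * ε p ω|
        ≤ ∑ p ∈ P, |haarBox p.1 p.2 (pt j) * ε p ω| := Finset.abs_sum_le_sum_abs _ _
      _ ≤ ∑ p ∈ P, 1 := by
          apply Finset.sum_le_sum
          intro p _
          rw [abs_mul]
          have h1 : |ε p ω| = 1 := by rcases hω p with h | h <;> rw [h] <;> norm_num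
          rw [h1, mul_one]
          exact abs_haarBox_le_one
      _ = (P.card : ℝ) := by rw [Finset.sum_const]; simp
  -- the max over grid points
  set G : Ω → ℝ := fun ω => J.sup' hJ (fun j => |S ω (pt j)|) with hGdef
  have hGmeas : Measurable G := by
    have h1 : Measurable (J.sup' hJ (fun j ω => |S ω (pt j)|)) :=
      Finset.measurable_sup' hJ (fun j _ => (hSmeas j).abs)
    have h2 : G = J.sup' hJ (fun j ω => |S ω (pt j)|) := by
      funext ω
      rw [hGdef, Finset.sup'_apply]
    rw [h2]
    exact h1
  have hGnonneg : ∀ ω, 0 ≤ G ω := by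
    intro ω
    obtain ⟨j0, hj0⟩ := hJ
    exact le_trans (abs_nonneg (S ω (pt j0)))
      (Finset.le_sup' (fun j => |S ω (pt j)|) hj0)
  have hGbd : ∀ᵐ ω ∂μ, G ω ≤ (P.card : ℝ) := by
    filter_upwards [hSbd] with ω hω
    exact Finset.sup'_le _ _ (fun j hj => hω j hj)
  have hGint : Integrable G μ := by
    refine Integrable.mono' (integrable_const ((P.card : ℝ))) hGmeas.aestronglyMeasurable ?_
    filter_upwards [hGbd] with ω hω
    rw [Real.norm_eq_abs, abs_of_nonneg (hGnonneg ω)]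
    exact hω
  -- pointwise: iSup ≤ G
  have hsup_le : ∀ ω, (⨆ x : Fin d → ℝ,
      |∑ r ∈ levIdx d n, ∑ k ∈ boxIdx d r, ε (r, k) ω * haarBox r k x|) ≤ G ω := by
    intro ω
    apply ciSup_le
    intro x
    rcases sum_piecewise (fun p => ε p ω) x with h | ⟨j, hj, h⟩
    · rw [h, abs_zero]; exact hGnonneg ω
    · have he : (∑ r ∈ levIdx d n, ∑ k ∈ boxIdx d r, ε (r, k) ω * haarBox r k x)
          = S ω (pt j) := h
      rw [he]
      exact Finset.le_sup' (fun j' => |S ω (pt j')|) hj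
  -- reduce to ∫ G
  have hstep1 : ∫ ω, (⨆ x : Fin d → ℝ,
      |∑ r ∈ levIdx d n, ∑ k ∈ boxIdx d r, ε (r, k) ω * haarBox r k x|) ∂μ
      ≤ ∫ ω, G ω ∂μ := by
    apply integral_mono_of_nonneg
    · exact Filter.Eventually.of_forall (fun ω => Real.iSup_nonneg (fun x => abs_nonneg _))
    · exact hGint
    · exact Filter.Eventually.of_forall hsup_le
  -- Chernoff-Jensen bound for ∫ G
  set Mc : ℝ := (2 : ℝ) ^ ((n + 1) * d) with hMcdef
  have hMc_card : (J.card : ℝ) = Mc := by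
    rw [hJdef, hMcdef, Fintype.card_piFinset]
    simp only [Finset.card_range, Finset.prod_const, Finset.card_univ, Fintype.card_fin]
    rw [← pow_mul]
    push_cast
    ring
  set L : ℝ := Real.log (2 * Mc) with hLdef
  have hMc_pos : 0 < Mc := by rw [hMcdef]; positivity
  have hL_pos : 0 < L := by
    rw [hLdef]
    apply Real.log_pos
    rw [hMcdef]
    have h1 : (1:ℝ) ≤ 2 ^ ((n+1)*d) := one_le_pow₀ (by norm_num)
    nlinarith
  set t : ℝ := Real.sqrt (2 * L / Nb) with htdef
  have ht_pos : 0 < t := Real.sqrt_pos.mpr (by positivity)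
  have ht_sq : t ^ 2 = 2 * L / Nb := Real.sq_sqrt (by positivity)
  -- integrability of exponentials
  have hexp_int : ∀ (c : ℝ) (j : Fin d → ℕ), j ∈ J →
      Integrable (fun ω => Real.exp (c * S ω (pt j))) μ := by
    intro c j hj
    refine Integrable.mono' (integrable_const (Real.exp (|c| * P.card)))
      (((hSmeas j).const_mul c).exp.aestronglyMeasurable) ?_
    filter_upwards [hSbd] with ω hω
    rw [Real.norm_eq_abs, Real.abs_exp]
    apply Real.exp_le_exp.mpr
    calc c * S ω (pt j) ≤ |c * S ω (pt j)| := le_abs_self _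
      _ = |c| * |S ω (pt j)| := abs_mul _ _
      _ ≤ |c| * P.card := mul_le_mul_of_nonneg_left (hω j hj) (abs_nonneg c)
  -- mgf bound at grid points
  have hmgf : ∀ (c : ℝ) (j : Fin d → ℕ), j ∈ J →
      ∫ ω, Real.exp (c * S ω (pt j)) ∂μ ≤ Real.exp (c ^ 2 * Nb / 2) := by
    intro c j hj
    have h1 : (fun ω => Real.exp (c * S ω (pt j)))
        = fun ω => Real.exp (c * ∑ p ∈ P, haarBox p.1 p.2 (pt j) * ε p ω) := by
      funext ω
      rw [hrepr j hj ω]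
    rw [h1]
    calc ∫ ω, Real.exp (c * ∑ p ∈ P, haarBox p.1 p.2 (pt j) * ε p ω) ∂μ
        ≤ Real.exp (c ^ 2 * (∑ p ∈ P, (haarBox p.1 p.2 (pt j)) ^ 2) / 2) :=
          mgf_rademacher_sum hmeas hindep hrad P _ c
      _ ≤ Real.exp (c ^ 2 * Nb / 2) := by
          apply Real.exp_le_exp.mpr
          have := hsq j
          nlinarith [sq_nonneg c]
  -- Integrability of exp (t * G)
  have hexpG_int : Integrable (fun ω => Real.exp (t * G ω)) μ := by
    refine Integrable.mono' (integrable_const (Real.exp (t * P.card)))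
      ((hGmeas.const_mul t).exp.aestronglyMeasurable) ?_
    filter_upwards [hGbd] with ω hω
    rw [Real.norm_eq_abs, Real.abs_exp]
    exact Real.exp_le_exp.mpr (mul_le_mul_of_nonneg_left hω ht_pos.le)
  -- pointwise bound exp (t G) ≤ ∑_j (exp (t S_j) + exp (-t S_j))
  have hptwise : ∀ ω, Real.exp (t * G ω)
      ≤ ∑ j ∈ J, (Real.exp (t * S ω (pt j)) + Real.exp (-t * S ω (pt j))) := by
    intro ω
    obtain ⟨j0, hj0, hj0eq⟩ := Finset.exists_mem_eq_sup' hJ (fun j => |S ω (pt j)|)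
    have hGo : G ω = |S ω (pt j0)| := hj0eq
    have h1 : Real.exp (t * G ω) ≤ Real.exp (t * S ω (pt j0)) + Real.exp (-t * S ω (pt j0)) := by
      rw [hGo]
      rcases abs_cases (S ω (pt j0)) with ⟨habs, _⟩ | ⟨habs, _⟩
      · rw [habs]
        nlinarith [Real.exp_pos (-t * S ω (pt j0))]
      · rw [habs]
        have : t * -S ω (pt j0) = -t * S ω (pt j0) := by ring
        rw [this]
        nlinarith [Real.exp_pos (t * S ω (pt j0))]
    refine le_trans h1 (Finset.single_le_sum
      (f := fun j => Real.exp (t * S ω (pt j)) + Real.exp (-t * S ω (pt j)))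
      (fun j _ => by positivity) hj0)
  -- integrate
  have hsum_int : Integrable (fun ω => ∑ j ∈ J,
      (Real.exp (t * S ω (pt j)) + Real.exp (-t * S ω (pt j)))) μ := by
    apply integrable_finset_sum
    intro j hj
    exact (hexp_int t j hj).add (hexp_int (-t) j hj)
  have hstep2 : ∫ ω, Real.exp (t * G ω) ∂μ ≤ 2 * Mc * Real.exp (t ^ 2 * Nb / 2) := by
    calc ∫ ω, Real.exp (t * G ω) ∂μ
        ≤ ∫ ω, (∑ j ∈ J, (Real.exp (t * S ω (pt j)) + Real.exp (-t * S ω (pt j)))) ∂μ :=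
          integral_mono hexpG_int hsum_int hptwise
      _ = ∑ j ∈ J, ((∫ ω, Real.exp (t * S ω (pt j)) ∂μ)
            + ∫ ω, Real.exp (-t * S ω (pt j)) ∂μ) := by
          have hadd : ∀ j ∈ J, Integrable
              (fun ω => Real.exp (t * S ω (pt j)) + Real.exp (-t * S ω (pt j))) μ :=
            fun j hj => (hexp_int t j hj).add (hexp_int (-t) j hj)
          rw [integral_finset_sum _ hadd]
          exact Finset.sum_congr rfl (fun j hj =>
            integral_add (hexp_int t j hj) (hexp_int (-t) j hj))
      _ ≤ ∑ j ∈ J, (Real.exp (t ^ 2 * Nb / 2) + Real.exp (t ^ 2 * Nb / 2)) := by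
          apply Finset.sum_le_sum
          intro j hj
          exact add_le_add (hmgf t j hj) (by simpa [neg_sq] using hmgf (-t) j hj)
      _ = (J.card : ℝ) * (2 * Real.exp (t ^ 2 * Nb / 2)) := by
          rw [Finset.sum_const, nsmul_eq_mul]
          ring
      _ = 2 * Mc * Real.exp (t ^ 2 * Nb / 2) := by rw [hMc_card]; ring
  -- Jensen
  have hjensen : Real.exp (t * ∫ ω, G ω ∂μ) ≤ ∫ ω, Real.exp (t * G ω) ∂μ := by
    have h1 : Integrable (fun ω => t * G ω) μ := hGint.const_mul t
    have h2 := exp_integral_le_integral_exp h1 hexpG_int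
    rw [integral_const_mul] at h2
    exact h2
  -- conclude t * ∫ G ≤ L + t^2 Nb / 2
  have hlog : t * ∫ ω, G ω ∂μ ≤ L + t ^ 2 * Nb / 2 := by
    have h1 : Real.exp (t * ∫ ω, G ω ∂μ) ≤ 2 * Mc * Real.exp (t ^ 2 * Nb / 2) :=
      le_trans hjensen hstep2
    have h2 : 2 * Mc * Real.exp (t ^ 2 * Nb / 2) = Real.exp (L + t ^ 2 * Nb / 2) := by
      rw [Real.exp_add, hLdef, Real.exp_log (by positivity)]
    rw [h2] at h1
    exact (Real.exp_le_exp.mp h1)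
  have hintG : ∫ ω, G ω ∂μ ≤ t * Nb := by
    have hL_eq : L = t ^ 2 * Nb / 2 := by
      rw [ht_sq]
      field_simp
    have : t * ∫ ω, G ω ∂μ ≤ t ^ 2 * Nb := by
      rw [hL_eq] at hlog
      linarith
    calc ∫ ω, G ω ∂μ = (t * ∫ ω, G ω ∂μ) / t := by field_simp
      _ ≤ (t ^ 2 * Nb) / t := by gcongr
      _ = t * Nb := by field_simp
  -- final numeric bound: t * Nb ≤ sqrt(6 d 2^(d-1)) * n^(d/2)
  have hfinal : t * Nb ≤ Real.sqrt (6 * d * 2 ^ (d - 1)) * (n : ℝ) ^ ((d : ℝ) / 2) := by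
    have htNb : t * Nb = Real.sqrt (2 * L * Nb) := by
      calc t * Nb = Real.sqrt (2 * L / Nb) * Real.sqrt (Nb ^ 2) := by
            rw [Real.sqrt_sq hNb_pos.le, htdef]
        _ = Real.sqrt (2 * L / Nb * Nb ^ 2) := (Real.sqrt_mul (by positivity) _).symm
        _ = Real.sqrt (2 * L * Nb) := by
            congr 1
            field_simp
    rw [htNb]
    have hrpow : (n : ℝ) ^ ((d : ℝ) / 2) = Real.sqrt ((n : ℝ) ^ d) := by
      rw [Real.sqrt_eq_rpow, ← Real.rpow_natCast (n:ℝ) d, ← Real.rpow_mul (by positivity)]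
      congr 1
      ring
    rw [hrpow, ← Real.sqrt_mul (by positivity)]
    apply Real.sqrt_le_sqrt
    -- 2 L Nb ≤ 6 d 2^(d-1) n^d
    have hL_le : L ≤ 3 * d * n := by
      rw [hLdef, hMcdef]
      have : (2:ℝ) * 2 ^ ((n+1)*d) = 2 ^ ((n+1)*d + 1) := by rw [pow_succ]; ring
      rw [this, Real.log_pow]
      have hlog2 : Real.log 2 ≤ 1 := by
        have := Real.log_le_sub_one_of_pos (show (0:ℝ) < 2 by norm_num)
        linarith
      calc ((n+1)*d + 1 : ℕ) * Real.log 2 ≤ ((n+1)*d + 1 : ℕ) * 1 := by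
            apply mul_le_mul_of_nonneg_left hlog2 (by positivity)
        _ = ((n+1)*d + 1 : ℕ) := by ring
        _ ≤ 3 * d * n := by
            push_cast
            have : (n+1)*d + 1 ≤ 3 * d * n := by nlinarith
            exact_mod_cast this
    have hNb_le : Nb ≤ 2 ^ (d-1) * (n:ℝ) ^ (d-1) := by
      rw [hNbdef]
      have h1 : ((n + 1 : ℕ) : ℝ) ≤ 2 * n := by
        push_cast
        have : (1:ℝ) ≤ n := by exact_mod_cast hn
        linarith
      calc ((n + 1 : ℕ) : ℝ) ^ (d-1) ≤ (2 * (n:ℝ)) ^ (d-1) := by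
            apply pow_le_pow_left₀ (by positivity) h1
        _ = 2 ^ (d-1) * (n:ℝ) ^ (d-1) := by rw [mul_pow]
    have hn1 : (1:ℝ) ≤ (n:ℝ) := by exact_mod_cast hn
    have hNd : (n:ℝ) * (n:ℝ) ^ (d-1) = (n:ℝ) ^ d := by
      rw [← pow_succ']
      congr 1
      omega
    calc 2 * L * Nb ≤ 2 * (3 * d * n) * (2 ^ (d-1) * (n:ℝ) ^ (d-1)) := by
          apply mul_le_mul
          · apply mul_le_mul_of_nonneg_left hL_le (by norm_num)
          · exact hNb_le
          · exact hNb_pos.le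
          · positivity
      _ = 6 * d * 2 ^ (d-1) * ((n:ℝ) * (n:ℝ) ^ (d-1)) := by ring
      _ = 6 * d * 2 ^ (d-1) * (n:ℝ) ^ d := by rw [hNd]
  calc ∫ ω, (⨆ x : Fin d → ℝ,
        |∑ r ∈ levIdx d n, ∑ k ∈ boxIdx d r, ε (r, k) ω * haarBox r k x|) ∂μ
      ≤ ∫ ω, G ω ∂μ := hstep1
    _ ≤ t * Nb := hintG
    _ ≤ _ := hfinal
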